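/- Let f be a bounded function on [0,∞) and let f̃ be its least concave majorant. Let 0 ≤ z₀ ≤ x₀ ≤ t₀ < t₁ < x₁ < z₁ < ∞, with all the inequalities strict if t₀ > 0, and let f* be the least concave majorant of the restriction of f to [z₀,z₁]. If f̃(x₀) = f(x₀) and f̃(x₁) = f(x₁), then f̃(t) = f*(t) for all x₀ ≤ t ≤ x₁. -/

import Mathlib

open Set

/-- `g` is the least concave majorant of `f` on the set `S`. -/
def IsLeastConcaveMajorant (S : Set ℝ) (f g : ℝ → ℝ) : Prop :=
  ConcaveOn ℝ S g ∧ (∀ x ∈ S, f x ≤ g x) ∧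
    ∀ h : ℝ → ℝ, ConcaveOn ℝ S h → (∀ x ∈ S, f x ≤ h x) → ∀ x ∈ S, g x ≤ h x

/-- chord inequality for a concave function, multiplied form -/
lemma chord_le_aux {s : Set ℝ} {g : ℝ → ℝ} (hg : ConcaveOn ℝ s g) {x y c : ℝ}
    (hx : x ∈ s) (hy : y ∈ s) (hxy : x < y) (h1 : x ≤ c) (h2 : c ≤ y) :
    (y - c) * g x + (c - x) * g y ≤ (y - x) * g c := by
  have hyx : 0 < y - x := by linarith
  have ha : 0 ≤ (y - c) / (y - x) := div_nonneg (by linarith) hyx.le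
  have hb : 0 ≤ (c - x) / (y - x) := div_nonneg (by linarith) hyx.le
  have hab : (y - c) / (y - x) + (c - x) / (y - x) = 1 := by field_simp; ring
  have hmain := hg.2 hx hy ha hb hab
  have hcc : ((y - c) / (y - x)) • x + ((c - x) / (y - x)) • y = c := by
    simp only [smul_eq_mul]; field_simp; ring
  rw [hcc] at hmain
  simp only [smul_eq_mul] at hmain
  have hm := mul_le_mul_of_nonneg_left hmain hyx.le
  calc (y - c) * g x + (c - x) * g y
      = (y - x) * ((y - c) / (y - x) * g x + (c - x) / (y - x) * g y) := by
        field_simp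
        try ring
    _ ≤ (y - x) * g c := hm


/-- transfer a chord bound through pointwise domination -/
lemma chord_transfer {x y c A B A' B' C : ℝ} (h1 : x ≤ c) (h2 : c ≤ y)
    (hA : A ≤ A') (hB : B ≤ B')
    (hch : (y - c) * A' + (c - x) * B' ≤ (y - x) * C) :
    (y - c) * A + (c - x) * B ≤ (y - x) * C := by
  nlinarith [mul_le_mul_of_nonneg_left hA (by linarith : (0:ℝ) ≤ y - c),
    mul_le_mul_of_nonneg_left hB (by linarith : (0:ℝ) ≤ c - x)]

/-- gluing two chord bounds through an inner chord bound -/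
lemma glue_combine {x y u v c A B U V C : ℝ}
    (hyx : x < y) (huv : u < v) (huc : u ≤ c) (hcv : c ≤ v)
    (hU : (y - u) * A + (u - x) * B ≤ (y - x) * U)
    (hV : (y - v) * A + (v - x) * B ≤ (y - x) * V)
    (hS : (v - c) * U + (c - u) * V ≤ (v - u) * C) :
    (y - c) * A + (c - x) * B ≤ (y - x) * C := by
  have m1 := mul_le_mul_of_nonneg_left hU (by linarith : (0:ℝ) ≤ v - c)
  have m2 := mul_le_mul_of_nonneg_left hV (by linarith : (0:ℝ) ≤ c - u)
  have m3 := mul_le_mul_of_nonneg_left hS (by linarith : (0:ℝ) ≤ y - x)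
  have step : (v - u) * ((y - c) * A + (c - x) * B) ≤ (v - u) * ((y - x) * C) := by
    nlinarith [m1, m2, m3]
  exact le_of_mul_le_mul_left step (by linarith)

set_option maxHeartbeats 1000000 in
/-- Lemma 5.2: let `f` be bounded on `[0,∞)` with least concave majorant `f̃`, let
`0 ≤ z₀ ≤ x₀ ≤ t₀ < t₁ < x₁ < z₁ < ∞`, with strict inequalities throughout if `t₀ > 0`,
and let `f*` be the least concave majorant of the restriction of `f` to `[z₀,z₁]`.
If `f̃(xᵢ) = f(xᵢ)` for `i = 0,1`, then `f̃ = f*` on `[x₀,x₁]`. -/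
theorem lcm_localization
    (f ftil fstar : ℝ → ℝ)
    (hbd : ∃ C : ℝ, ∀ x ∈ Ici (0 : ℝ), |f x| ≤ C)
    (hlcm : IsLeastConcaveMajorant (Ici (0 : ℝ)) f ftil)
    (z₀ x₀ t₀ t₁ x₁ z₁ : ℝ)
    (h0 : 0 ≤ z₀) (hz₀x₀ : z₀ ≤ x₀) (hx₀t₀ : x₀ ≤ t₀) (ht₀t₁ : t₀ < t₁)
    (ht₁x₁ : t₁ < x₁) (hx₁z₁ : x₁ < z₁)
    (hstrict : 0 < t₀ → 0 < z₀ ∧ z₀ < x₀ ∧ x₀ < t₀)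
    (hlcm_star : IsLeastConcaveMajorant (Icc z₀ z₁) f fstar)
    (htouch₀ : ftil x₀ = f x₀) (htouch₁ : ftil x₁ = f x₁) :
    ∀ t ∈ Icc x₀ x₁, ftil t = fstar t := by
  classical
  have hx01 : x₀ ≤ x₁ := by linarith
  have hsub1 : Icc z₀ z₁ ⊆ Ici (0 : ℝ) := fun t ht => le_trans h0 ht.1
  have hftil_conc : ConcaveOn ℝ (Icc z₀ z₁) ftil := hlcm.1.subset hsub1 (convex_Icc _ _)
  have hstar_le : ∀ t ∈ Icc z₀ z₁, fstar t ≤ ftil t :=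
    hlcm_star.2.2 ftil hftil_conc (fun t ht => hlcm.2.1 t (hsub1 ht))
  have hx0mem : x₀ ∈ Icc z₀ z₁ := ⟨hz₀x₀, by linarith⟩
  have hx1mem : x₁ ∈ Icc z₀ z₁ := ⟨by linarith, hx₁z₁.le⟩
  have heq0 : fstar x₀ = ftil x₀ :=
    le_antisymm (hstar_le _ hx0mem) (htouch₀ ▸ hlcm_star.2.1 x₀ hx0mem)
  have heq1 : fstar x₁ = ftil x₁ :=
    le_antisymm (hstar_le _ hx1mem) (htouch₁ ▸ hlcm_star.2.1 x₁ hx1mem)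
  -- the glued function
  set h : ℝ → ℝ := fun t => if x₀ ≤ t ∧ t ≤ x₁ then fstar t else ftil t with hdef
  have hval_in : ∀ t, x₀ ≤ t → t ≤ x₁ → h t = fstar t := by
    intro t h1 h2; simp only [hdef]; rw [if_pos ⟨h1, h2⟩]
  have hval_out : ∀ t, ¬(x₀ ≤ t ∧ t ≤ x₁) → h t = ftil t := by
    intro t ht; simp only [hdef]; rw [if_neg ht]
  have hmemzz : ∀ t, x₀ ≤ t → t ≤ x₁ → t ∈ Icc z₀ z₁ := fun t h1 h2 =>
    ⟨by linarith, by linarith⟩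
  have hle : ∀ t, h t ≤ ftil t := by
    intro t
    by_cases ht : x₀ ≤ t ∧ t ≤ x₁
    · rw [hval_in t ht.1 ht.2]; exact hstar_le t (hmemzz t ht.1 ht.2)
    · rw [hval_out t ht]
  have hhx0 : h x₀ = ftil x₀ := by rw [hval_in x₀ le_rfl hx01]; exact heq0
  have hhx1 : h x₁ = ftil x₁ := by rw [hval_in x₁ hx01 le_rfl]; exact heq1
  -- key concavity combination, assuming x ≤ y
  have key : ∀ x ∈ Ici (0 : ℝ), ∀ y ∈ Ici (0 : ℝ), x ≤ y → ∀ a b : ℝ,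
      0 ≤ a → 0 ≤ b → a + b = 1 → a * h x + b * h y ≤ h (a * x + b * y) := by
    intro x hx y hy hxy a b ha hb hab
    obtain rfl : b = 1 - a := by linarith
    rcases eq_or_lt_of_le hxy with rfl | hlt
    · have hxx : a * x + (1 - a) * x = x := by ring
      rw [hxx]; exact le_of_eq (by ring)
    set c := a * x + (1 - a) * y with hc
    have hyx : 0 < y - x := by linarith
    have hb' := mul_nonneg hb (sub_nonneg.mpr hxy)
    have ha' := mul_nonneg ha (sub_nonneg.mpr hxy)
    have hxc : x ≤ c := by rw [hc]; nlinarith [hb']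
    have hcy : c ≤ y := by rw [hc]; nlinarith [ha']
    suffices H : (y - c) * h x + (c - x) * h y ≤ (y - x) * h c by
      have Heq : (y - x) * (a * h x + (1 - a) * h y)
          = (y - c) * h x + (c - x) * h y := by rw [hc]; ring
      have H2 : (y - x) * (a * h x + (1 - a) * h y) ≤ (y - x) * h c := by
        rw [Heq]; exact H
      exact le_of_mul_le_mul_left H2 hyx
    by_cases hcmem : x₀ ≤ c ∧ c ≤ x₁
    · -- c inside [x₀, x₁]
      set u := max x x₀ with hu
      set v := min y x₁ with hv
      have hxu : x ≤ u := le_max_left _ _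
      have hu0 : x₀ ≤ u := le_max_right _ _
      have huc : u ≤ c := max_le hxc hcmem.1
      have hcv : c ≤ v := le_min hcy hcmem.2
      have hvy : v ≤ y := min_le_left _ _
      have hv1 : v ≤ x₁ := min_le_right _ _
      have hu1 : u ≤ x₁ := le_trans huc hcmem.2
      have hv0 : x₀ ≤ v := le_trans hcmem.1 hcv
      have claimU : (y - u) * h x + (u - x) * h y ≤ (y - x) * h u := by
        rcases le_or_gt x₀ x with hx0x | hxx0
        · have huu : u = x := max_eq_left hx0x
          rw [huu, sub_self, zero_mul, add_zero]
        · have huu : u = x₀ := max_eq_right hxx0.le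
          rw [huu]
          rw [hhx0]
          exact chord_transfer hxx0.le (by linarith : x₀ ≤ y) (hle x) (hle y)
            (chord_le_aux hlcm.1 hx hy hlt hxx0.le (by linarith : x₀ ≤ y))
      have claimV : (y - v) * h x + (v - x) * h y ≤ (y - x) * h v := by
        rcases le_or_gt y x₁ with hyx1 | hx1y
        · have hvv : v = y := min_eq_left hyx1
          rw [hvv, sub_self, zero_mul, zero_add]
        · have hvv : v = x₁ := min_eq_right hx1y.le
          rw [hvv]
          rw [hhx1]
          exact chord_transfer (by linarith : x ≤ x₁) hx1y.le (hle x) (hle y)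
            (chord_le_aux hlcm.1 hx hy hlt (by linarith : x ≤ x₁) hx1y.le)
      rcases eq_or_lt_of_le (le_trans huc hcv) with hequv | huv
      · have hcu : c = u := le_antisymm (hequv ▸ hcv) huc
        rw [hcu]; exact claimU
      · have humem : u ∈ Icc z₀ z₁ := hmemzz u hu0 hu1
        have hvmem : v ∈ Icc z₀ z₁ := hmemzz v hv0 hv1
        have hchS := chord_le_aux hlcm_star.1 humem hvmem huv huc hcv
        rw [← hval_in u hu0 hu1, ← hval_in v hv0 hv1,
          ← hval_in c hcmem.1 hcmem.2] at hchS
        exact glue_combine hlt huv huc hcv claimU claimV hchS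
    · -- c outside
      rw [hval_out c hcmem]
      exact chord_transfer hxc hcy (hle x) (hle y)
        (chord_le_aux hlcm.1 hx hy hlt hxc hcy)
  have hconc : ConcaveOn ℝ (Ici (0 : ℝ)) h := by
    refine ⟨convex_Ici 0, ?_⟩
    intro x hx y hy a b ha hb hab
    simp only [smul_eq_mul]
    rcases le_total x y with hxy | hxy
    · exact key x hx y hy hxy a b ha hb hab
    · have hk := key y hy x hx hxy b a hb ha (by linarith)
      have harg : a * x + b * y = b * y + a * x := by ring
      rw [harg]
      linarith
  have hmaj : ∀ t ∈ Ici (0 : ℝ), f t ≤ h t := by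
    intro t ht
    by_cases h' : x₀ ≤ t ∧ t ≤ x₁
    · rw [hval_in t h'.1 h'.2]; exact hlcm_star.2.1 t (hmemzz t h'.1 h'.2)
    · rw [hval_out t h']; exact hlcm.2.1 t ht
  have hfin := hlcm.2.2 h hconc hmaj
  intro t ht
  have h1 : ftil t ≤ h t := hfin t (by exact le_trans (le_trans h0 hz₀x₀) ht.1)
  rw [hval_in t ht.1 ht.2] at h1
  exact le_antisymm h1 (hstar_le t (hmemzz t ht.1 ht.2))
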